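/- Let 0 < p < 1/2. Then Σ_{n=1}^∞ Σ_{w∈{1,2,3}ⁿ} α₁(C_w) = ∞, i.e., the sum over all nonempty finite words w of the operator norms ‖C_w‖ diverges; consequently s₀ := inf{ s > 0 : Σ_{n=1}^∞ Σ_{w∈{1,2,3}ⁿ} φ^s(C_w) < ∞ } satisfies s₀ ≥ 1. -/

import Mathlib

open Matrix MeasureTheory Filter
open scoped ENNReal

noncomputable section

abbrev E3 : Type := EuclideanSpace ℝ (Fin 3)
abbrev Mat3 : Type := Matrix (Fin 3) (Fin 3) ℝ

/-- The action of a matrix on Euclidean 3-space. -/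
noncomputable def matApply (A : Mat3) (x : E3) : E3 := Matrix.toEuclideanCLM (𝕜 := ℝ) A x

/-- The largest singular value `α₁(A) = ‖A‖` (Euclidean operator norm). -/
noncomputable def sv1 (A : Mat3) : ℝ := ‖Matrix.toEuclideanCLM (𝕜 := ℝ) A‖

/-- The smallest singular value `α₃(A) = ‖A⁻¹‖⁻¹`. -/
noncomputable def sv3 (A : Mat3) : ℝ := (‖Matrix.toEuclideanCLM (𝕜 := ℝ) A⁻¹‖)⁻¹

/-- The middle singular value `α₂(A) = |det A| / (α₁(A) α₃(A))`. -/
noncomputable def sv2 (A : Mat3) : ℝ := |A.det| / (sv1 A * sv3 A)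

/-- Falconer's singular value function `φ^s(A)`. -/
noncomputable def svf (s : ℝ) (A : Mat3) : ℝ :=
  if s ≤ 1 then (sv1 A) ^ s
  else if s ≤ 2 then sv1 A * (sv2 A) ^ (s - 1)
  else if s ≤ 3 then sv1 A * sv2 A * (sv3 A) ^ (s - 2)
  else (sv1 A * sv2 A * sv3 A) ^ (s / 3)

/-- The three matrices `C₁, C₂, C₃` (with 0-based indexing). -/
def Cmat (p : ℝ) : Fin 3 → Mat3 :=
  ![!![1 - 2*p, -p, -p; 0, p, 0; 0, 0, p],
    !![p, 0, 0; -p, 1 - 2*p, -p; 0, 0, p],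
    !![p, 0, 0; 0, p, 0; -p, -p, 1 - 2*p]]

/-- The product `C_w = C_{j₁} ⋯ C_{jₙ}` along a word `w = (j₁, …, jₙ)`. -/
noncomputable def Cword (p : ℝ) {n : ℕ} (w : Fin n → Fin 3) : Mat3 :=
  ((List.ofFn w).map (Cmat p)).prod

/-- standard basis vectors of `E3` -/
noncomputable def eVec (i : Fin 3) : E3 := EuclideanSpace.single i 1

/-- The affine map `G_i(x) = C_i x + 2p·e_i`. -/
noncomputable def Gmap (p : ℝ) (i : Fin 3) (x : E3) : E3 :=
  matApply (Cmat p i) x + (2 * p) • eVec i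

/-- The composition `G_w = G_{j₁} ∘ ⋯ ∘ G_{jₙ}` along a word `w = (j₁, …, jₙ)`. -/
noncomputable def Gword (p : ℝ) {n : ℕ} (w : Fin n → Fin 3) : E3 → E3 :=
  ((List.ofFn w).map (Gmap p)).foldr (· ∘ ·) id

/-- Summability of the double series `Σ_{n=1}^∞ Σ_{w ∈ {1,2,3}ⁿ} φ^s(C_w)`
(all terms are nonnegative, so summability is equivalent to finiteness of the sum). -/
def seriesSummable (p s : ℝ) : Prop :=
  Summable (fun x : Σ n : ℕ, (Fin (n+1) → Fin 3) => svf s (Cword p x.2))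

/-- The affinity dimension `s₀ = inf{s > 0 : Σ_n Σ_w φ^s(C_w) < ∞}`. -/
noncomputable def s0 (p : ℝ) : ℝ := sInf {s : ℝ | 0 < s ∧ seriesSummable p s}

/-- The minimal number of balls of radius `δ` needed to cover `A`. -/
noncomputable def coverNum (A : Set E3) (δ : ℝ) : ℕ :=
  sInf {n : ℕ | ∃ t : Finset E3, t.card = n ∧ A ⊆ ⋃ x ∈ t, Metric.ball x δ}

/-- The upper box-counting dimension `limsup_{δ→0⁺} log N_δ(A) / (−log δ)`. -/
noncomputable def upperBoxDim (A : Set E3) : ℝ :=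
  Filter.limsup (fun δ : ℝ => Real.log (coverNum A δ) / (-Real.log δ))
    (nhdsWithin 0 (Set.Ioi 0))

/-- The vector `(1,1,1)`. -/
noncomputable def onesVec : E3 := (WithLp.equiv 2 (Fin 3 → ℝ)).symm ![1, 1, 1]

/-- Orthogonal projection of `ℝ³` onto the plane `V = {x : x₁ + x₂ + x₃ = 0}`. -/
noncomputable def projV (x : E3) : E3 := x - (((x 0) + (x 1) + (x 2)) / 3) • onesVec

/-- The vector `(a,b,c)` in `E3`. -/
noncomputable def vec3 (a b c : ℝ) : E3 := (WithLp.equiv 2 (Fin 3 → ℝ)).symm ![a, b, c]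

/-- The triangle `T₀ = conv{e₁, e₂, e₃}`. -/
noncomputable def T0set : Set E3 := convexHull ℝ {eVec 0, eVec 1, eVec 2}

/-- The standard tetrahedron `W = conv{0, e₁, e₂, e₃}`. -/
noncomputable def Wset : Set E3 := convexHull ℝ {0, eVec 0, eVec 1, eVec 2}

/-- The triangle `T_ε = conv{(1−2ε,ε,ε), (ε,1−2ε,ε), (ε,ε,1−2ε)}`. -/
noncomputable def Ttri (ε : ℝ) : Set E3 :=
  convexHull ℝ {vec3 (1 - 2*ε) ε ε, vec3 ε (1 - 2*ε) ε, vec3 ε ε (1 - 2*ε)}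

/-! ### Auxiliary lemmas -/

section Aux

lemma sv1_nonneg (A : Mat3) : 0 ≤ sv1 A := norm_nonneg _

/-- the embedding of the two-letter alphabet into the three-letter alphabet -/
def emb : Fin 2 → Fin 3 := Fin.castLE (by norm_num)

lemma emb_injective : Function.Injective emb := Fin.castLE_injective _

lemma Cword_cons (p : ℝ) {n : ℕ} (a : Fin 3) (w : Fin n → Fin 3) :
    Cword p (Fin.cons a w) = Cmat p a * Cword p w := by
  simp [Cword, List.ofFn_succ, Fin.cons_zero, Fin.cons_succ]

lemma base_identity (p : ℝ) :
    (Cmat p 0 + Cmat p 1) *ᵥ ![1, -1, 0] = ![1, -1, 0] := by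
  funext i
  fin_cases i <;>
    simp [Cmat, Matrix.add_mulVec, Matrix.mulVec, dotProduct,
        Fin.sum_univ_three, Matrix.cons_val_zero, Matrix.cons_val_one,
        Matrix.head_cons] <;>
    ring_nf

lemma sum_words (p : ℝ) : ∀ n : ℕ,
    (∑ w : Fin n → Fin 2, Cword p (emb ∘ w)) *ᵥ ![1, -1, 0] = ![1, -1, 0]
  | 0 => by
      have h : ∀ w : Fin 0 → Fin 2, Cword p (emb ∘ w) = 1 := by
        intro w; simp [Cword]
      simp [h]
  | (n + 1) => by
      classical
      have hs : (∑ w : Fin (n+1) → Fin 2, Cword p (emb ∘ w)) =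
          (Cmat p 0 + Cmat p 1) * (∑ w : Fin n → Fin 2, Cword p (emb ∘ w)) := by
        rw [← Equiv.sum_comp (Fin.consEquiv (fun _ : Fin (n+1) => Fin 2))
          (fun w : Fin (n+1) → Fin 2 => Cword p (emb ∘ w))]
        rw [Fintype.sum_prod_type]
        have h1 : ∀ (x : Fin 2) (g : Fin n → Fin 2),
            Cword p (emb ∘ (Fin.consEquiv (fun _ : Fin (n+1) => Fin 2)) (x, g)) =
              Cmat p (emb x) * Cword p (emb ∘ g) := by
          intro x g
          show Cword p (emb ∘ Fin.cons x g) = _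
          rw [Fin.comp_cons, Cword_cons]
        simp only [h1, ← Finset.mul_sum]
        rw [Fin.sum_univ_two, ← add_mul]
        rfl
      rw [hs, ← Matrix.mulVec_mulVec, sum_words p n, base_identity]

lemma sum_sv1_ge (p : ℝ) (n : ℕ) :
    1 ≤ ∑ w : Fin n → Fin 3, sv1 (Cword p w) := by
  classical
  set v0 : Fin 3 → ℝ := ![1, -1, 0] with hv0
  set vE : E3 := (WithLp.equiv 2 (Fin 3 → ℝ)).symm v0 with hvE
  have hv : 0 < ‖vE‖ := by
    rw [norm_pos_iff]
    intro h
    have h0 := congrFun (congrArg (WithLp.equiv 2 (Fin 3 → ℝ)) h) 0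
    simp [hvE, hv0] at h0
  have hsum : (∑ w : Fin n → Fin 2,
      (Matrix.toEuclideanCLM (𝕜 := ℝ) (Cword p (emb ∘ w)))) vE = vE := by
    rw [← map_sum, hvE, (show ∀ (A : Mat3) (x : Fin 3 → ℝ), Matrix.toEuclideanCLM (𝕜 := ℝ) A ((WithLp.equiv 2 (Fin 3 → ℝ)).symm x) = (WithLp.equiv 2 (Fin 3 → ℝ)).symm (Matrix.toLin' A x) from fun _ _ => rfl)]
    congr 1
    rw [Matrix.toLin'_apply]
    exact sum_words p n
  have h2 : ‖vE‖ ≤ (∑ w : Fin n → Fin 2, sv1 (Cword p (emb ∘ w))) * ‖vE‖ := by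
    calc ‖vE‖ = ‖(∑ w : Fin n → Fin 2,
          (Matrix.toEuclideanCLM (𝕜 := ℝ) (Cword p (emb ∘ w)))) vE‖ := by rw [hsum]
      _ = ‖∑ w : Fin n → Fin 2,
          (Matrix.toEuclideanCLM (𝕜 := ℝ) (Cword p (emb ∘ w))) vE‖ := by
            rw [ContinuousLinearMap.sum_apply]
      _ ≤ ∑ w : Fin n → Fin 2,
          ‖(Matrix.toEuclideanCLM (𝕜 := ℝ) (Cword p (emb ∘ w))) vE‖ :=
            norm_sum_le _ _
      _ ≤ ∑ w : Fin n → Fin 2, sv1 (Cword p (emb ∘ w)) * ‖vE‖ :=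
            Finset.sum_le_sum fun w _ => ContinuousLinearMap.le_opNorm _ _
      _ = (∑ w : Fin n → Fin 2, sv1 (Cword p (emb ∘ w))) * ‖vE‖ :=
            (Finset.sum_mul _ _ _).symm
  have h3 : 1 ≤ ∑ w : Fin n → Fin 2, sv1 (Cword p (emb ∘ w)) := by
    nlinarith [hv, h2]
  have hinj : Function.Injective (fun w : Fin n → Fin 2 => emb ∘ w) :=
    fun a b h => funext fun i => emb_injective (congrFun h i)
  have himg : ∑ u ∈ Finset.univ.image (fun w : Fin n → Fin 2 => emb ∘ w),
      sv1 (Cword p u) = ∑ w : Fin n → Fin 2, sv1 (Cword p (emb ∘ w)) :=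
    Finset.sum_image (fun a _ b _ h => hinj h)
  have hle : ∑ u ∈ Finset.univ.image (fun w : Fin n → Fin 2 => emb ∘ w),
      sv1 (Cword p u) ≤ ∑ u : Fin n → Fin 3, sv1 (Cword p u) :=
    Finset.sum_le_sum_of_subset_of_nonneg (Finset.subset_univ _)
      (fun u _ _ => sv1_nonneg _)
  rw [himg] at hle
  exact h3.trans hle

lemma not_summable_aux {f : (Σ n : ℕ, (Fin (n+1) → Fin 3)) → ℝ}
    (hf : ∀ x, 0 ≤ f x)
    (h : ∀ n : ℕ, 1 ≤ ∑ w : Fin (n+1) → Fin 3, f ⟨n, w⟩) :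
    ¬ Summable f := by
  intro hs
  have h2 := ((summable_sigma_of_nonneg hf).mp hs).2
  have h3 : Filter.Tendsto (fun n => ∑' w : Fin (n+1) → Fin 3, f ⟨n, w⟩)
      Filter.atTop (nhds 0) := h2.tendsto_atTop_zero
  have h4 : (1 : ℝ) ≤ 0 :=
    ge_of_tendsto' h3 (fun n => by rw [tsum_fintype]; exact h n)
  linarith

lemma det_Cmat (p : ℝ) (i : Fin 3) : (Cmat p i).det = p^2 * (1 - 2*p) := by
  fin_cases i <;>
    simp [Cmat, Matrix.det_fin_three, Matrix.cons_val_zero, Matrix.cons_val_one,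
      Matrix.head_cons, Matrix.vecHead, Matrix.vecTail] <;>
    ring_nf <;> tauto

lemma det_Cword_list (p : ℝ) : ∀ l : List (Fin 3),
    ((l.map (Cmat p)).prod).det = (p^2 * (1 - 2*p)) ^ l.length
  | [] => by simp
  | a :: t => by
      simp [Matrix.det_mul, det_Cmat, det_Cword_list p t, pow_succ]
      ring

lemma det_Cword (p : ℝ) {n : ℕ} (w : Fin n → Fin 3) :
    (Cword p w).det = (p^2 * (1 - 2*p)) ^ n := by
  have := det_Cword_list p (List.ofFn w)
  simpa [Cword] using this

lemma sv1_ne_zero (A : Mat3) (h : A.det ≠ 0) : sv1 A ≠ 0 := by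
  intro h0
  have hT : Matrix.toEuclideanCLM (𝕜 := ℝ) A = 0 := norm_eq_zero.mp h0
  have hA : A = 0 := by
    have h2 := congrArg (Matrix.toEuclideanCLM (𝕜 := ℝ) (n := Fin 3)).symm hT
    simpa using h2
  rw [hA] at h
  exact h Matrix.det_zero

lemma sv3_ne_zero (A : Mat3) (h : A.det ≠ 0) : sv3 A ≠ 0 := by
  have h1 : A.det * A⁻¹.det = 1 := by
    rw [← Matrix.det_mul, Matrix.mul_nonsing_inv A h.isUnit, Matrix.det_one]
  have hinv : A⁻¹ ≠ 0 := by
    intro h0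
    rw [h0, Matrix.det_zero, mul_zero] at h1
    norm_num at h1
  have hT : Matrix.toEuclideanCLM (𝕜 := ℝ) A⁻¹ ≠ 0 := by
    intro h0
    have h2 := congrArg (Matrix.toEuclideanCLM (𝕜 := ℝ) (n := Fin 3)).symm h0
    simp only [StarAlgEquiv.symm_apply_apply, map_zero] at h2
    exact hinv h2
  exact inv_ne_zero (norm_ne_zero_iff.mpr hT)

lemma svf_of_le_one {s : ℝ} (hs : s ≤ 1) (A : Mat3) : svf s A = sv1 A ^ s := by
  rw [svf, if_pos hs]

lemma svf_high (m : ℕ) (hm : 2 ≤ m) (A : Mat3) (hdet : A.det ≠ 0) :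
    svf (3 * (m : ℝ)) A = |A.det| ^ m := by
  have hm' : (2 : ℝ) ≤ (m : ℝ) := by exact_mod_cast hm
  have hA1 := sv1_ne_zero A hdet
  have hA3 := sv3_ne_zero A hdet
  rw [svf, if_neg (by linarith), if_neg (by linarith), if_neg (by linarith)]
  have hprod : sv1 A * sv2 A * sv3 A = |A.det| := by
    simp only [sv2]
    field_simp
  rw [hprod]
  have h3 : (3 * (m : ℝ)) / 3 = (m : ℝ) := by ring
  rw [h3, Real.rpow_natCast]

lemma real_rpow_add_le (x y q : ℝ) (hx : 0 ≤ x) (hy : 0 ≤ y)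
    (h0 : 0 ≤ q) (h1 : q ≤ 1) : (x + y) ^ q ≤ x ^ q + y ^ q := by
  lift x to NNReal using hx
  lift y to NNReal using hy
  exact_mod_cast NNReal.rpow_add_le_add_rpow x y h0 h1

lemma rpow_sum_le {ι : Type*} (t : Finset ι) (f : ι → ℝ)
    (hf : ∀ i ∈ t, 0 ≤ f i) {q : ℝ} (h0 : 0 < q) (h1 : q ≤ 1) :
    (∑ i ∈ t, f i) ^ q ≤ ∑ i ∈ t, f i ^ q := by
  classical
  revert hf
  refine Finset.induction_on t (by intro _; simp [Real.zero_rpow h0.ne']) ?_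
  intro a s has ih hf
  rw [Finset.sum_insert has, Finset.sum_insert has]
  have hfa : 0 ≤ f a := hf a (Finset.mem_insert_self a s)
  have hfs : 0 ≤ ∑ i ∈ s, f i :=
    Finset.sum_nonneg fun i hi => hf i (Finset.mem_insert_of_mem hi)
  have h2 := real_rpow_add_le (f a) (∑ i ∈ s, f i) q hfa hfs h0.le h1
  have h3 := ih (fun i hi => hf i (Finset.mem_insert_of_mem hi))
  linarith

end Aux

/-- Theorem (the sum of the norms `‖C_w‖` over all nonempty words diverges, hence `s₀ ≥ 1`). -/
theorem sum_norms_diverges (p : ℝ) (hp0 : 0 < p) (hp1 : p < 1/2) :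
    ¬ Summable (fun x : Σ n : ℕ, (Fin (n+1) → Fin 3) => sv1 (Cword p x.2)) ∧ 1 ≤ s0 p := by
  constructor
  · exact not_summable_aux (fun x => sv1_nonneg _) (fun n => sum_sv1_ge p (n+1))
  · -- `s0 p ≥ 1`
    set D : ℝ := p^2 * (1 - 2*p) with hD
    have hD0 : 0 < D := by
      rw [hD]; exact mul_pos (by positivity) (by linarith)
    have hD1 : D < 1 := by rw [hD]; nlinarith
    obtain ⟨m₀, hm₀⟩ := exists_pow_lt_of_lt_one (by norm_num : (0:ℝ) < 1/3) hD1
    set m : ℕ := max m₀ 2 with hm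
    have hm2 : 2 ≤ m := le_max_right _ _
    have hDm : D ^ m < 1/3 :=
      lt_of_le_of_lt (pow_le_pow_of_le_one hD0.le hD1.le (le_max_left _ _)) hm₀
    have hdetw : ∀ {k : ℕ} (w : Fin k → Fin 3), (Cword p w).det = D ^ k :=
      fun w => det_Cword p w
    -- the set is nonempty: `s = 3m` works
    have hmem : (3 * (m : ℝ)) ∈ {s : ℝ | 0 < s ∧ seriesSummable p s} := by
      constructor
      · have : (2:ℝ) ≤ (m:ℝ) := by exact_mod_cast hm2
        linarith
      · unfold seriesSummable
        have hkey : ∀ x : Σ n : ℕ, (Fin (n+1) → Fin 3),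
            svf (3 * (m : ℝ)) (Cword p x.2) = (D ^ (x.1 + 1)) ^ m := by
          rintro ⟨n, w⟩
          have hd : (Cword p w).det = D ^ (n+1) := hdetw w
          rw [svf_high m hm2 _ (by rw [hd]; positivity), hd,
            abs_of_pos (by positivity)]
        rw [show (fun x : Σ n : ℕ, (Fin (n+1) → Fin 3) =>
            svf (3 * (m : ℝ)) (Cword p x.2)) =
            fun x => (D ^ (x.1 + 1)) ^ m from funext hkey]
        apply (summable_sigma_of_nonneg (fun x => by positivity)).mpr
        refine ⟨fun n => (hasSum_fintype _).summable, ?_⟩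
        have hts : ∀ n : ℕ, (∑' _ : Fin (n+1) → Fin 3, (D ^ (n+1)) ^ m)
            = (3 * D ^ m) ^ (n+1) := by
          intro n
          rw [tsum_fintype, Finset.sum_const, Finset.card_univ, Fintype.card_fun,
            Fintype.card_fin, Fintype.card_fin, nsmul_eq_mul]
          push_cast
          rw [← pow_mul, mul_comm (n+1) m, pow_mul, ← mul_pow]
        rw [show (fun n : ℕ => ∑' _ : Fin (n+1) → Fin 3, (D ^ (n+1)) ^ m)
            = fun n => (3 * D ^ m) ^ (n+1) from funext hts]
        have hr0 : (0:ℝ) ≤ 3 * D ^ m := by positivity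
        have hr1 : 3 * D ^ m < 1 := by linarith
        have := (summable_geometric_of_lt_one hr0 hr1).mul_left (3 * D ^ m)
        refine this.congr fun n => ?_
        rw [pow_succ, mul_comm]
    refine le_csInf ⟨_, hmem⟩ ?_
    rintro b ⟨hb0, hbs⟩
    by_contra hlt
    push_neg at hlt
    refine not_summable_aux (f := fun x : Σ n : ℕ, (Fin (n+1) → Fin 3) =>
        svf b (Cword p x.2)) ?_ ?_ hbs
    · intro x
      show 0 ≤ svf b (Cword p x.2)
      rw [svf_of_le_one hlt.le]
      exact Real.rpow_nonneg (sv1_nonneg _) _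
    · intro n
      have hge := sum_sv1_ge p (n+1)
      have h1 : (1:ℝ) ≤ (∑ w : Fin (n+1) → Fin 3, sv1 (Cword p w)) ^ b := by
        calc (1:ℝ) = 1 ^ b := (Real.one_rpow b).symm
          _ ≤ _ := Real.rpow_le_rpow (by norm_num) hge hb0.le
      have h2 := rpow_sum_le Finset.univ (fun w : Fin (n+1) → Fin 3 =>
        sv1 (Cword p w)) (fun w _ => sv1_nonneg _) hb0 hlt.le
      have h3 : ∑ w : Fin (n+1) → Fin 3, svf b (Cword p w)
          = ∑ w : Fin (n+1) → Fin 3, sv1 (Cword p w) ^ b := by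
        refine Finset.sum_congr rfl fun w _ => ?_
        exact svf_of_le_one hlt.le _
      rw [h3]
      exact h1.trans h2
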